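/- For any 2-covector ω on an m-dimensional real inner product space, ‖ω‖_C ≤ ‖ω‖₂ ≤ √⌊m/2⌋ · ‖ω‖_C, and both inequalities are sharp: equality holds on the left for simple (decomposable) 2-covectors, and for m = 2n the standard symplectic form achieves equality on the right. -/

import Mathlib

/-- The Euclidean norm of a 2-covector (alternating bilinear form) on an inner product
space with respect to an orthonormal basis (each unordered pair of indices is counted
twice in the double sum, whence the factor `1/2`). -/
noncomputable def eucNormBil {V : Type*} [NormedAddCommGroup V] [InnerProductSpace ℝ V]
    {m : ℕ} (b : OrthonormalBasis (Fin m) ℝ V) (ω : V →ₗ[ℝ] V →ₗ[ℝ] ℝ) : ℝ :=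
  Real.sqrt ((1 / 2) * ∑ i : Fin m, ∑ j : Fin m, (ω (b i) (b j)) ^ 2)

/-- The comass norm of a 2-covector. -/
noncomputable def comassBil {V : Type*} [NormedAddCommGroup V] [InnerProductSpace ℝ V]
    (ω : V →ₗ[ℝ] V →ₗ[ℝ] ℝ) : ℝ :=
  sSup {r : ℝ | ∃ u v : V, ‖u‖ = 1 ∧ ‖v‖ = 1 ∧ ω u v = r}


open Finset

section Helpers

variable {V : Type*} [NormedAddCommGroup V] [InnerProductSpace ℝ V] {m : ℕ}

local notation "⟪" x ", " y "⟫" => @inner ℝ _ _ x y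

lemma my_parseval (b : OrthonormalBasis (Fin m) ℝ V) (x y : V) :
    ∑ i, ⟪b i, x⟫ * ⟪b i, y⟫ = ⟪x, y⟫ := by
  rw [← b.sum_inner_mul_inner x y]
  exact Finset.sum_congr rfl fun i _ => by rw [real_inner_comm x (b i)]

lemma my_parseval_sq (b : OrthonormalBasis (Fin m) ℝ V) (x : V) :
    ∑ i, ⟪b i, x⟫ ^ 2 = ‖x‖ ^ 2 := by
  rw [← real_inner_self_eq_norm_sq, ← my_parseval b x x]
  exact Finset.sum_congr rfl fun i _ => sq _

lemma my_bessel2 (v w r : V) (hv : ‖v‖ = 1) (hw : ‖w‖ = 1) (hvw : ⟪v, w⟫ = 0) :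
    ⟪r, v⟫ ^ 2 + ⟪r, w⟫ ^ 2 ≤ ‖r‖ ^ 2 := by
  have h := real_inner_self_nonneg (x := r - ⟪r, v⟫ • v - ⟪r, w⟫ • w)
  simp only [inner_sub_left, inner_sub_right, real_inner_smul_left, real_inner_smul_right] at h
  have hvv : ⟪v, v⟫ = 1 := by rw [real_inner_self_eq_norm_sq, hv]; norm_num
  have hww : ⟪w, w⟫ = 1 := by rw [real_inner_self_eq_norm_sq, hw]; norm_num
  have hwv : ⟪w, v⟫ = 0 := by rw [real_inner_comm]; exact hvw
  have hrv : ⟪v, r⟫ = ⟪r, v⟫ := real_inner_comm _ _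
  have hrw : ⟪w, r⟫ = ⟪r, w⟫ := real_inner_comm _ _
  have hrr : ⟪r, r⟫ = ‖r‖ ^ 2 := real_inner_self_eq_norm_sq r
  rw [hvv, hww, hwv, hvw, hrv, hrw, hrr] at h
  nlinarith [h]

noncomputable def myAA (b : OrthonormalBasis (Fin m) ℝ V) (ω : V →ₗ[ℝ] V →ₗ[ℝ] ℝ) : V →ₗ[ℝ] V :=
  ∑ i, (ω (b i)).smulRight (b i)

lemma myAA_apply (b : OrthonormalBasis (Fin m) ℝ V) (ω : V →ₗ[ℝ] V →ₗ[ℝ] ℝ) (v : V) :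
    myAA b ω v = ∑ i, ω (b i) v • b i := by
  simp [myAA, LinearMap.sum_apply]

lemma inner_myAA (b : OrthonormalBasis (Fin m) ℝ V) (ω : V →ₗ[ℝ] V →ₗ[ℝ] ℝ) (u v : V) :
    ⟪u, myAA b ω v⟫ = ω u v := by
  rw [myAA_apply, inner_sum]
  conv_rhs => rw [← b.sum_repr' u]
  rw [map_sum, LinearMap.sum_apply]
  exact Finset.sum_congr rfl fun i _ => by
    rw [real_inner_smul_right, map_smul, LinearMap.smul_apply, smul_eq_mul,
      real_inner_comm u (b i), mul_comm]

lemma norm_myAA_sq (b : OrthonormalBasis (Fin m) ℝ V) (ω : V →ₗ[ℝ] V →ₗ[ℝ] ℝ) (v : V) :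
    ‖myAA b ω v‖ ^ 2 = ∑ i, (ω (b i) v) ^ 2 := by
  rw [← my_parseval_sq b]
  exact Finset.sum_congr rfl fun i _ => by rw [inner_myAA]

lemma frob_eq (b : OrthonormalBasis (Fin m) ℝ V) (ω : V →ₗ[ℝ] V →ₗ[ℝ] ℝ) :
    ∑ i, ∑ j, (ω (b i) (b j)) ^ 2 = ∑ j, ‖myAA b ω (b j)‖ ^ 2 := by
  rw [Finset.sum_comm]
  exact Finset.sum_congr rfl fun j _ => (norm_myAA_sq b ω (b j)).symm

lemma row_eq (b : OrthonormalBasis (Fin m) ℝ V) (ω : V →ₗ[ℝ] V →ₗ[ℝ] ℝ)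
    (hskew : ∀ x y, ω x y = - ω y x) (x : V) :
    ∑ j, (ω x (b j)) ^ 2 = ‖myAA b ω x‖ ^ 2 := by
  rw [← my_parseval_sq b (myAA b ω x)]
  refine Finset.sum_congr rfl fun j _ => ?_
  rw [inner_myAA, hskew x (b j)]
  ring

/-- Key spectral-type inequality for skew forms. -/
lemma key_skew (b : OrthonormalBasis (Fin m) ℝ V) (ω : V →ₗ[ℝ] V →ₗ[ℝ] ℝ)
    (hskew : ∀ x y, ω x y = - ω y x) (v : V) (hv : ‖v‖ = 1) :
    2 * ‖myAA b ω v‖ ^ 2 ≤ ∑ i, ∑ j, (ω (b i) (b j)) ^ 2 := by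
  by_cases h0 : myAA b ω v = 0
  · rw [h0, frob_eq]
    simp only [norm_zero]
    have h5 : (0:ℝ) ≤ ∑ j, ‖myAA b ω (b j)‖ ^ 2 := by positivity
    nlinarith [h5]
  · have hN : (0:ℝ) < ‖myAA b ω v‖ := norm_pos_iff.mpr h0
    set w : V := ‖myAA b ω v‖⁻¹ • myAA b ω v with hw
    have hw1 : ‖w‖ = 1 := by
      rw [hw, norm_smul, norm_inv, norm_norm, inv_mul_cancel₀ hN.ne']
    have hvw : ⟪v, w⟫ = 0 := by
      rw [hw, real_inner_smul_right, inner_myAA]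
      have : ω v v = 0 := by linarith [hskew v v]
      simp [this]
    have hAvw : myAA b ω v = ‖myAA b ω v‖ • w := by
      rw [hw, smul_smul, mul_inv_cancel₀ hN.ne', one_smul]
    have hle : ‖myAA b ω v‖ ≤ ‖myAA b ω w‖ := by
      have h1 : ⟪myAA b ω v, myAA b ω v⟫ = ω (myAA b ω v) v :=
        inner_myAA b ω (myAA b ω v) v
      have h2 : ω (myAA b ω v) v = - ⟪v, myAA b ω (myAA b ω v)⟫ := by
        rw [hskew, inner_myAA]
      have h3 : ‖myAA b ω v‖ ^ 2 ≤ ‖myAA b ω (myAA b ω v)‖ := by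
        rw [← real_inner_self_eq_norm_sq, h1, h2]
        calc - ⟪v, myAA b ω (myAA b ω v)⟫ ≤ |⟪v, myAA b ω (myAA b ω v)⟫| := neg_le_abs _
          _ ≤ ‖v‖ * ‖myAA b ω (myAA b ω v)‖ := abs_real_inner_le_norm _ _
          _ = ‖myAA b ω (myAA b ω v)‖ := by rw [hv, one_mul]
      have h4 : myAA b ω (myAA b ω v) = ‖myAA b ω v‖ • myAA b ω w := by
        conv_lhs => rw [hAvw]
        rw [map_smul]
      rw [h4, norm_smul, norm_norm] at h3
      nlinarith [h3, hN]
    have hbes : ‖myAA b ω v‖ ^ 2 + ‖myAA b ω w‖ ^ 2 ≤ ∑ i, ∑ j, (ω (b i) (b j)) ^ 2 := by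
      rw [norm_myAA_sq, norm_myAA_sq, ← Finset.sum_add_distrib]
      apply Finset.sum_le_sum
      intro i _
      have hv' : (ω (b i) v) ^ 2 = ⟪myAA b ω (b i), v⟫ ^ 2 := by
        rw [hskew, ← inner_myAA b ω v (b i), real_inner_comm]
        ring
      have hw' : (ω (b i) w) ^ 2 = ⟪myAA b ω (b i), w⟫ ^ 2 := by
        rw [hskew, ← inner_myAA b ω w (b i), real_inner_comm]
        ring
      rw [hv', hw', row_eq b ω hskew (b i)]
      exact my_bessel2 v w (myAA b ω (b i)) hv hw1 hvw
    nlinarith [hle, norm_nonneg (myAA b ω v), norm_nonneg (myAA b ω w), hbes]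

end Helpers

section Part1

variable {V : Type*} [NormedAddCommGroup V] [InnerProductSpace ℝ V] {m : ℕ}

local notation "⟪" x ", " y "⟫" => @inner ℝ _ _ x y

lemma euc_nonneg (b : OrthonormalBasis (Fin m) ℝ V) (ω : V →ₗ[ℝ] V →ₗ[ℝ] ℝ) :
    0 ≤ eucNormBil b ω := Real.sqrt_nonneg _

lemma elem_le_euc (b : OrthonormalBasis (Fin m) ℝ V) (ω : V →ₗ[ℝ] V →ₗ[ℝ] ℝ)
    (hskew : ∀ x y, ω x y = - ω y x) :
    ∀ r ∈ {r : ℝ | ∃ u v : V, ‖u‖ = 1 ∧ ‖v‖ = 1 ∧ ω u v = r}, r ≤ eucNormBil b ω := by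
  rintro r ⟨u, v, hu, hv, rfl⟩
  have h2 : ω u v ≤ ‖myAA b ω v‖ := by
    rw [← inner_myAA]
    calc ⟪u, myAA b ω v⟫ ≤ |⟪u, myAA b ω v⟫| := le_abs_self _
      _ ≤ ‖u‖ * ‖myAA b ω v‖ := abs_real_inner_le_norm _ _
      _ = ‖myAA b ω v‖ := by rw [hu, one_mul]
  have h3 : ‖myAA b ω v‖ ≤ eucNormBil b ω := by
    rw [eucNormBil, ← Real.sqrt_sq (norm_nonneg (myAA b ω v))]
    apply Real.sqrt_le_sqrt
    linarith [key_skew b ω hskew v hv]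
  linarith

lemma part1 [FiniteDimensional ℝ V] (hm : Module.finrank ℝ V = m)
    (b : OrthonormalBasis (Fin m) ℝ V) (ω : V →ₗ[ℝ] V →ₗ[ℝ] ℝ)
    (hskew : ∀ x y, ω x y = - ω y x) :
    comassBil ω ≤ eucNormBil b ω ∧
      eucNormBil b ω ≤ Real.sqrt (m / 2 : ℕ) * comassBil ω := by
  constructor
  · exact Real.sSup_le (elem_le_euc b ω hskew) (euc_nonneg b ω)
  rcases Nat.eq_zero_or_pos m with hm0 | hm1
  · subst hm0
    have h0 : eucNormBil b ω = 0 := by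
      simp [eucNormBil]
    rw [h0]
    have : ((0 / 2 : ℕ) : ℝ) = 0 := by norm_num
    rw [this, Real.sqrt_zero, zero_mul]
  · have hbdd : BddAbove {r : ℝ | ∃ u v : V, ‖u‖ = 1 ∧ ‖v‖ = 1 ∧ ω u v = r} :=
      ⟨eucNormBil b ω, fun r hr => elem_le_euc b ω hskew r hr⟩
    set i0 : Fin m := ⟨0, hm1⟩ with hi0
    have h0S : (0:ℝ) ∈ {r : ℝ | ∃ u v : V, ‖u‖ = 1 ∧ ‖v‖ = 1 ∧ ω u v = r} :=
      ⟨b i0, b i0, b.orthonormal.1 i0, b.orthonormal.1 i0, by linarith [hskew (b i0) (b i0)]⟩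
    have hC0 : 0 ≤ comassBil ω := le_csSup hbdd h0S
    have hAle : ∀ x : V, ‖x‖ = 1 → ‖myAA b ω x‖ ≤ comassBil ω := by
      intro x hx
      by_cases h : myAA b ω x = 0
      · rw [h, norm_zero]; exact hC0
      · apply le_csSup hbdd
        refine ⟨‖myAA b ω x‖⁻¹ • myAA b ω x, x, ?_, hx, ?_⟩
        · rw [norm_smul, norm_inv, norm_norm, inv_mul_cancel₀ (norm_pos_iff.mpr h).ne']
        · rw [← inner_myAA, real_inner_smul_left, real_inner_self_eq_norm_sq, sq,
            ← mul_assoc, inv_mul_cancel₀ (norm_pos_iff.mpr h).ne', one_mul]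
    have hsq : ∀ x : V, ‖x‖ = 1 → ‖myAA b ω x‖ ^ 2 ≤ comassBil ω ^ 2 := by
      intro x hx
      have := hAle x hx
      nlinarith [norm_nonneg (myAA b ω x)]
    have htr : ∑ i, ∑ j, (ω (b i) (b j)) ^ 2 ≤ 2 * ((m / 2 : ℕ) : ℝ) * comassBil ω ^ 2 := by
      rcases Nat.even_or_odd m with he | ho
      · have he' := Nat.even_iff.mp he
        have hm2 : 2 * (m / 2) = m := by omega
        rw [frob_eq]
        calc ∑ j, ‖myAA b ω (b j)‖ ^ 2 ≤ ∑ _j : Fin m, comassBil ω ^ 2 :=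
              Finset.sum_le_sum fun j _ => hsq (b j) (b.orthonormal.1 j)
          _ = (m : ℝ) * comassBil ω ^ 2 := by
              rw [Finset.sum_const, Finset.card_univ, Fintype.card_fin, nsmul_eq_mul]
          _ = 2 * ((m / 2 : ℕ) : ℝ) * comassBil ω ^ 2 := by
              have : ((m:ℕ):ℝ) = 2 * ((m / 2 : ℕ) : ℝ) := by exact_mod_cast congrArg (Nat.cast (R := ℝ)) hm2.symm
              rw [← this]
      · -- odd case
        have ho' := Nat.odd_iff.mp ho
        have hm2 : 2 * (m / 2) = m - 1 := by omega
        -- kernel vector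
        set M : Matrix (Fin m) (Fin m) ℝ := Matrix.of (fun i j => ω (b i) (b j)) with hM
        have hdet : M.det = 0 := by
          have ht : M.transpose = -M := by
            ext i j
            simp only [Matrix.transpose_apply, Matrix.neg_apply, hM, Matrix.of_apply]
            exact hskew (b j) (b i)
          have h1 : M.det = (-M).det := by rw [← ht, Matrix.det_transpose]
          rw [Matrix.det_neg, Fintype.card_fin, Odd.neg_one_pow ho] at h1
          linarith
        obtain ⟨p, hp0, hpM⟩ := Matrix.exists_mulVec_eq_zero_iff.mpr hdet
        set z0 : V := ∑ j, p j • b j with hz0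
        have hz0coord : ∀ i, ⟪b i, z0⟫ = p i := by
          intro i
          rw [hz0, inner_sum]
          simp [real_inner_smul_right, orthonormal_iff_ite.mp b.orthonormal]
        have hz0ne : z0 ≠ 0 := by
          intro h
          apply hp0
          funext i
          have := hz0coord i
          rw [h, inner_zero_right] at this
          exact this.symm
        have hAz0 : myAA b ω z0 = 0 := by
          have hco : ∀ i, ⟪b i, myAA b ω z0⟫ = 0 := by
            intro i
            rw [inner_myAA, hz0, map_sum]
            have hMp := congrFun hpM i
            simp only [Matrix.mulVec, dotProduct, hM, Matrix.of_apply,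
              Pi.zero_apply] at hMp
            rw [← hMp]
            exact Finset.sum_congr rfl fun j _ => by
              rw [map_smul, smul_eq_mul, mul_comm]
          rw [← b.sum_repr' (myAA b ω z0)]
          rw [Finset.sum_congr rfl fun i _ => by rw [hco i]]
          simp
        have hz0n : (0:ℝ) < ‖z0‖ := norm_pos_iff.mpr hz0ne
        set z : V := ‖z0‖⁻¹ • z0 with hz
        have hz1 : ‖z‖ = 1 := by
          rw [hz, norm_smul, norm_inv, norm_norm, inv_mul_cancel₀ hz0n.ne']
        have hAz : myAA b ω z = 0 := by rw [hz, map_smul, hAz0, smul_zero]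
        have hcard : Module.finrank ℝ V = Fintype.card (Fin m) := by
          rw [hm, Fintype.card_fin]
        have horth : Orthonormal ℝ (({i0} : Set (Fin m)).restrict (fun _ => z)) := by
          constructor
          · intro i; exact hz1
          · intro i j hij
            exact absurd (Subtype.ext (i.2.trans j.2.symm)) hij
        obtain ⟨c, hc⟩ := horth.exists_orthonormalBasis_extension_of_card_eq hcard
        have hc0 : c i0 = z := hc i0 rfl
        have hfr : ∑ i, ∑ j, (ω (b i) (b j)) ^ 2 = ∑ k, ‖myAA b ω (c k)‖ ^ 2 := by
          rw [frob_eq]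
          calc ∑ j, ‖myAA b ω (b j)‖ ^ 2
              = ∑ j, ∑ k, (ω (c k) (b j)) ^ 2 := by
                refine Finset.sum_congr rfl fun j _ => ?_
                rw [← my_parseval_sq c (myAA b ω (b j))]
                exact Finset.sum_congr rfl fun k _ => by rw [inner_myAA]
            _ = ∑ k, ∑ j, (ω (c k) (b j)) ^ 2 := Finset.sum_comm
            _ = ∑ k, ‖myAA b ω (c k)‖ ^ 2 :=
                Finset.sum_congr rfl fun k _ => row_eq b ω hskew (c k)
        rw [hfr]
        calc ∑ k, ‖myAA b ω (c k)‖ ^ 2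
            ≤ ∑ k : Fin m, (if k = i0 then 0 else comassBil ω ^ 2) := by
              refine Finset.sum_le_sum fun k _ => ?_
              by_cases hk : k = i0
              · rw [hk, hc0, hAz, if_pos rfl]
                simp
              · rw [if_neg hk]
                exact hsq (c k) (c.orthonormal.1 k)
          _ = (m : ℝ) * comassBil ω ^ 2 - comassBil ω ^ 2 := by
              rw [Finset.sum_congr rfl fun k _ => show
                    (if k = i0 then (0:ℝ) else comassBil ω ^ 2)
                      = comassBil ω ^ 2 - (if k = i0 then comassBil ω ^ 2 else 0) by
                  split_ifs <;> ring]
              rw [Finset.sum_sub_distrib, Finset.sum_const, Finset.card_univ, Fintype.card_fin,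
                Finset.sum_ite_eq' Finset.univ i0 (fun _ => comassBil ω ^ 2),
                if_pos (Finset.mem_univ i0), nsmul_eq_mul]
          _ ≤ 2 * ((m / 2 : ℕ) : ℝ) * comassBil ω ^ 2 := by
              have hcast : 2 * ((m / 2 : ℕ) : ℝ) = (m : ℝ) - 1 := by
                have : ((2 * (m / 2) : ℕ) : ℝ) = ((m - 1 : ℕ) : ℝ) := by exact_mod_cast congrArg (Nat.cast (R := ℝ)) hm2
                push_cast [hm1] at this
                linarith
              rw [hcast]
              nlinarith [hC0]
    rw [eucNormBil, ← Real.sqrt_sq hC0]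
    rw [← Real.sqrt_mul (by positivity : (0:ℝ) ≤ ((m / 2 : ℕ) : ℝ))]
    apply Real.sqrt_le_sqrt
    nlinarith [htr]

end Part1

section Part2

variable {V : Type*} [NormedAddCommGroup V] [InnerProductSpace ℝ V] {m : ℕ}

local notation "⟪" x ", " y "⟫" => @inner ℝ _ _ x y

lemma lagrange (f g : Fin m → ℝ) :
    ∑ i, ∑ j, (f i * g j - f j * g i) ^ 2 =
      2 * ((∑ i, f i ^ 2) * (∑ i, g i ^ 2) - (∑ i, f i * g i) ^ 2) := by
  have inner_eq : ∀ i, ∑ j, (f i * g j - f j * g i) ^ 2 =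
      f i ^ 2 * (∑ j, g j ^ 2) + g i ^ 2 * (∑ j, f j ^ 2)
        - (2 * (f i * g i)) * (∑ j, f j * g j) := by
    intro i
    rw [Finset.mul_sum, Finset.mul_sum, Finset.mul_sum, ← Finset.sum_add_distrib,
      ← Finset.sum_sub_distrib]
    exact Finset.sum_congr rfl fun j _ => by ring
  rw [Finset.sum_congr rfl fun i _ => inner_eq i, Finset.sum_sub_distrib,
    Finset.sum_add_distrib, ← Finset.sum_mul, ← Finset.sum_mul, ← Finset.sum_mul,
    ← Finset.mul_sum]
  ring

lemma det2_bound (p q r s : ℝ) : (p * s - q * r) ^ 2 ≤ (p ^ 2 + q ^ 2) * (r ^ 2 + s ^ 2) := by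
  nlinarith [sq_nonneg (p * r + q * s)]

lemma simple_bound_ortho (a c u w : V) (hu : ‖u‖ = 1) (hw : ‖w‖ = 1) (huw : ⟪u, w⟫ = 0) :
    (⟪a, u⟫ * ⟪c, w⟫ - ⟪a, w⟫ * ⟪c, u⟫) ^ 2 ≤ ‖a‖ ^ 2 * ‖c‖ ^ 2 - ⟪a, c⟫ ^ 2 := by
  by_cases ha : a = 0
  · simp [ha]
  · have han : (0:ℝ) < ‖a‖ ^ 2 := pow_pos (norm_pos_iff.mpr ha) 2
    set t : ℝ := ⟪a, c⟫ / ‖a‖ ^ 2 with htd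
    set c' : V := c - t • a with hc'
    have hac' : ⟪a, c'⟫ = 0 := by
      rw [hc', inner_sub_right, real_inner_smul_right, htd, ← real_inner_self_eq_norm_sq]
      have : ⟪a, a⟫ ≠ 0 := by rw [real_inner_self_eq_norm_sq]; exact han.ne'
      field_simp
      ring
    have hcc' : ‖c'‖ ^ 2 = ‖c‖ ^ 2 - 2 * t * ⟪a, c⟫ + t ^ 2 * ‖a‖ ^ 2 := by
      have hexp : ⟪c', c'⟫ = ⟪c, c⟫ - 2 * t * ⟪a, c⟫ + t ^ 2 * ⟪a, a⟫ := by
        rw [hc']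
        simp only [inner_sub_left, inner_sub_right, real_inner_smul_left,
          real_inner_smul_right, real_inner_comm c a]
        ring
      rw [← real_inner_self_eq_norm_sq c', hexp, real_inner_self_eq_norm_sq,
        real_inner_self_eq_norm_sq]
    have hEc : ‖a‖ ^ 2 * ‖c'‖ ^ 2 = ‖a‖ ^ 2 * ‖c‖ ^ 2 - ⟪a, c⟫ ^ 2 := by
      rw [hcc', htd]
      field_simp
      ring
    have hD : ⟪a, u⟫ * ⟪c, w⟫ - ⟪a, w⟫ * ⟪c, u⟫ = ⟪a, u⟫ * ⟪c', w⟫ - ⟪a, w⟫ * ⟪c', u⟫ := by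
      rw [hc']
      simp only [inner_sub_left, real_inner_smul_left]
      ring
    rw [hD, ← hEc]
    have hbA := my_bessel2 u w a hu hw huw
    have hbC := my_bessel2 u w c' hu hw huw
    have hdet := det2_bound ⟪a, u⟫ ⟪a, w⟫ ⟪c', u⟫ ⟪c', w⟫
    nlinarith [sq_nonneg ⟪a, u⟫, sq_nonneg ⟪a, w⟫, sq_nonneg ⟪c', u⟫, sq_nonneg ⟪c', w⟫,
      sq_nonneg ‖c'‖, sq_nonneg ‖a‖]

lemma simple_bound (a c u v : V) (hu : ‖u‖ = 1) (hv : ‖v‖ = 1) :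
    ⟪a, u⟫ * ⟪c, v⟫ - ⟪a, v⟫ * ⟪c, u⟫ ≤ Real.sqrt (‖a‖ ^ 2 * ‖c‖ ^ 2 - ⟪a, c⟫ ^ 2) := by
  have huu : ⟪u, u⟫ = 1 := by rw [real_inner_self_eq_norm_sq, hu]; norm_num
  set v' : V := v - ⟪u, v⟫ • u with hv'
  have hDv : ⟪a, u⟫ * ⟪c, v⟫ - ⟪a, v⟫ * ⟪c, u⟫ = ⟪a, u⟫ * ⟪c, v'⟫ - ⟪a, v'⟫ * ⟪c, u⟫ := by
    rw [hv']
    simp only [inner_sub_right, real_inner_smul_right]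
    ring
  by_cases hv0 : v' = 0
  · rw [hDv, hv0]
    simp only [inner_zero_right, mul_zero, zero_mul, sub_zero, zero_sub, neg_zero]
    exact Real.sqrt_nonneg _
  · have hv'n : (0:ℝ) < ‖v'‖ := norm_pos_iff.mpr hv0
    set w : V := ‖v'‖⁻¹ • v' with hwd
    have hw1 : ‖w‖ = 1 := by
      rw [hwd, norm_smul, norm_inv, norm_norm, inv_mul_cancel₀ hv'n.ne']
    have huw : ⟪u, w⟫ = 0 := by
      rw [hwd, real_inner_smul_right, hv', inner_sub_right, real_inner_smul_right, huu]
      ring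
    have hv'w : v' = ‖v'‖ • w := by
      rw [hwd, smul_smul, mul_inv_cancel₀ hv'n.ne', one_smul]
    have hv'le : ‖v'‖ ≤ 1 := by
      have h2 : ‖v'‖ ^ 2 = 1 - ⟪u, v⟫ ^ 2 := by
        have hexp : ⟪v', v'⟫ = ⟪v, v⟫ - ⟪u, v⟫ ^ 2 := by
          rw [hv']
          simp only [inner_sub_left, inner_sub_right, real_inner_smul_left,
            real_inner_smul_right, huu, real_inner_comm v u]
          ring
        rw [← real_inner_self_eq_norm_sq v', hexp, real_inner_self_eq_norm_sq, hv]
        norm_num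
      nlinarith [sq_nonneg ⟪u, v⟫, norm_nonneg v']
    have hDw : ⟪a, u⟫ * ⟪c, v'⟫ - ⟪a, v'⟫ * ⟪c, u⟫
        = ‖v'‖ * (⟪a, u⟫ * ⟪c, w⟫ - ⟪a, w⟫ * ⟪c, u⟫) := by
      conv_lhs => rw [hv'w]
      simp only [real_inner_smul_right]
      ring
    have habs : |⟪a, u⟫ * ⟪c, w⟫ - ⟪a, w⟫ * ⟪c, u⟫|
        ≤ Real.sqrt (‖a‖ ^ 2 * ‖c‖ ^ 2 - ⟪a, c⟫ ^ 2) := by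
      rw [← Real.sqrt_sq_eq_abs]
      exact Real.sqrt_le_sqrt (simple_bound_ortho a c u w hu hw1 huw)
    rw [hDv, hDw]
    calc ‖v'‖ * (⟪a, u⟫ * ⟪c, w⟫ - ⟪a, w⟫ * ⟪c, u⟫)
        ≤ ‖v'‖ * |⟪a, u⟫ * ⟪c, w⟫ - ⟪a, w⟫ * ⟪c, u⟫| := by
          gcongr
          exact le_abs_self _
      _ ≤ 1 * Real.sqrt (‖a‖ ^ 2 * ‖c‖ ^ 2 - ⟪a, c⟫ ^ 2) := by
          apply mul_le_mul hv'le habs (abs_nonneg _) zero_le_one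
      _ = _ := one_mul _

end Part2

section Part2Main

variable {V : Type*} [NormedAddCommGroup V] [InnerProductSpace ℝ V] {m : ℕ}

local notation "⟪" x ", " y "⟫" => @inner ℝ _ _ x y

lemma part2 [FiniteDimensional ℝ V] (hm : Module.finrank ℝ V = m)
    (b : OrthonormalBasis (Fin m) ℝ V) (ω : V →ₗ[ℝ] V →ₗ[ℝ] ℝ)
    (h : ∃ α β : V →ₗ[ℝ] ℝ, ∀ x y, ω x y = α x * β y - α y * β x) :
    eucNormBil b ω = comassBil ω := by
  obtain ⟨α, β, hω⟩ := h
  set a : V := ∑ i, α (b i) • b i with had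
  set c : V := ∑ i, β (b i) • b i with hcd
  have hα : ∀ x, α x = ⟪a, x⟫ := by
    intro x
    rw [had, sum_inner]
    conv_lhs => rw [← b.sum_repr' x, map_sum]
    exact Finset.sum_congr rfl fun i _ => by
      rw [map_smul, smul_eq_mul, real_inner_smul_left, mul_comm]
  have hβ : ∀ x, β x = ⟪c, x⟫ := by
    intro x
    rw [hcd, sum_inner]
    conv_lhs => rw [← b.sum_repr' x, map_sum]
    exact Finset.sum_congr rfl fun i _ => by
      rw [map_smul, smul_eq_mul, real_inner_smul_left, mul_comm]
  set E : ℝ := ‖a‖ ^ 2 * ‖c‖ ^ 2 - ⟪a, c⟫ ^ 2 with hEd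
  have hE0 : 0 ≤ E := by
    have h1 := abs_real_inner_le_norm a c
    have h2 := abs_nonneg ⟪a, c⟫
    rw [hEd]
    nlinarith [sq_abs ⟪a, c⟫, norm_nonneg a, norm_nonneg c]
  have hfa : ∑ i, (α (b i)) ^ 2 = ‖a‖ ^ 2 := by
    rw [← my_parseval_sq b a]
    exact Finset.sum_congr rfl fun i _ => by rw [hα, real_inner_comm]
  have hfc : ∑ i, (β (b i)) ^ 2 = ‖c‖ ^ 2 := by
    rw [← my_parseval_sq b c]
    exact Finset.sum_congr rfl fun i _ => by rw [hβ, real_inner_comm]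
  have hfac : ∑ i, α (b i) * β (b i) = ⟪a, c⟫ := by
    rw [← my_parseval b a c]
    exact Finset.sum_congr rfl fun i _ => by
      rw [hα, hβ, real_inner_comm a (b i), real_inner_comm c (b i)]
  have heuc : eucNormBil b ω = Real.sqrt E := by
    rw [eucNormBil]
    congr 1
    calc (1/2 : ℝ) * ∑ i, ∑ j, (ω (b i) (b j)) ^ 2
        = (1/2 : ℝ) * ∑ i, ∑ j, (α (b i) * β (b j) - α (b j) * β (b i)) ^ 2 := by
          congr 1
          exact Finset.sum_congr rfl fun i _ => Finset.sum_congr rfl fun j _ => by rw [hω]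
      _ = (1/2 : ℝ) * (2 * ((∑ i, (α (b i)) ^ 2) * (∑ i, (β (b i)) ^ 2)
            - (∑ i, α (b i) * β (b i)) ^ 2)) := by rw [lagrange]
      _ = E := by rw [hfa, hfc, hfac, hEd]; ring
  have hub : ∀ r ∈ {r : ℝ | ∃ u v : V, ‖u‖ = 1 ∧ ‖v‖ = 1 ∧ ω u v = r},
      r ≤ Real.sqrt E := by
    rintro r ⟨u, v, hu, hv, rfl⟩
    rw [hω, hα, hα, hβ, hβ]
    exact simple_bound a c u v hu hv
  rw [heuc]
  refine le_antisymm ?_ (Real.sSup_le hub (Real.sqrt_nonneg E))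
  by_cases hm0 : m = 0
  · have hsub : Subsingleton V := by
      rw [← Module.finrank_zero_iff (R := ℝ)]
      rw [hm, hm0]
    have ha0 : a = 0 := Subsingleton.elim _ _
    have hc0 : c = 0 := Subsingleton.elim _ _
    have hE : E = 0 := by rw [hEd, ha0, hc0]; simp
    have hSempty : {r : ℝ | ∃ u v : V, ‖u‖ = 1 ∧ ‖v‖ = 1 ∧ ω u v = r} = ∅ := by
      ext r
      simp only [Set.mem_setOf_eq, Set.mem_empty_iff_false, iff_false]
      rintro ⟨u, v, hu, _, _⟩
      have : u = 0 := Subsingleton.elim _ _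
      rw [this, norm_zero] at hu
      norm_num at hu
    rw [hE, Real.sqrt_zero, comassBil, hSempty, Real.sSup_empty]
  · have hm1 : 0 < m := Nat.pos_of_ne_zero hm0
    have hbdd : BddAbove {r : ℝ | ∃ u v : V, ‖u‖ = 1 ∧ ‖v‖ = 1 ∧ ω u v = r} :=
      ⟨Real.sqrt E, fun r hr => hub r hr⟩
    by_cases hE : E = 0
    · rw [hE, Real.sqrt_zero]
      refine le_csSup hbdd ⟨b ⟨0, hm1⟩, b ⟨0, hm1⟩, b.orthonormal.1 _, b.orthonormal.1 _, ?_⟩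
      rw [hω]; ring
    · have hEpos : 0 < E := lt_of_le_of_ne hE0 (Ne.symm hE)
      have ha : a ≠ 0 := by
        intro h0
        rw [hEd, h0] at hEpos
        simp at hEpos
      have han : (0:ℝ) < ‖a‖ ^ 2 := pow_pos (norm_pos_iff.mpr ha) 2
      set t : ℝ := ⟪a, c⟫ / ‖a‖ ^ 2 with htd
      set c' : V := c - t • a with hc'
      have hac' : ⟪a, c'⟫ = 0 := by
        rw [hc', inner_sub_right, real_inner_smul_right, htd, ← real_inner_self_eq_norm_sq]
        have : ⟪a, a⟫ ≠ 0 := by rw [real_inner_self_eq_norm_sq]; exact han.ne'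
        field_simp
        ring
      have hcc' : ‖a‖ ^ 2 * ‖c'‖ ^ 2 = E := by
        have hexp : ⟪c', c'⟫ = ⟪c, c⟫ - 2 * t * ⟪a, c⟫ + t ^ 2 * ⟪a, a⟫ := by
          rw [hc']
          simp only [inner_sub_left, inner_sub_right, real_inner_smul_left,
            real_inner_smul_right, real_inner_comm c a]
          ring
        rw [← real_inner_self_eq_norm_sq c', hexp, real_inner_self_eq_norm_sq,
          real_inner_self_eq_norm_sq, htd, hEd]
        field_simp
        ring
      have hc'pos : (0:ℝ) < ‖c'‖ ^ 2 := by
        by_contra hcon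
        push_neg at hcon
        have : ‖c'‖ ^ 2 = 0 := le_antisymm hcon (by positivity)
        rw [this, mul_zero] at hcc'
        exact hE hcc'.symm
      have hc'0 : c' ≠ 0 := by
        intro h0
        rw [h0, norm_zero] at hc'pos
        norm_num at hc'pos
      have hanorm : (0:ℝ) < ‖a‖ := norm_pos_iff.mpr ha
      have hc'norm : (0:ℝ) < ‖c'‖ := norm_pos_iff.mpr hc'0
      set u : V := ‖a‖⁻¹ • a with hud
      set v : V := ‖c'‖⁻¹ • c' with hvd
      have hu1 : ‖u‖ = 1 := by
        rw [hud, norm_smul, norm_inv, norm_norm, inv_mul_cancel₀ hanorm.ne']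
      have hv1 : ‖v‖ = 1 := by
        rw [hvd, norm_smul, norm_inv, norm_norm, inv_mul_cancel₀ hc'norm.ne']
      have hcv : ⟪c, c'⟫ = ‖c'‖ ^ 2 := by
        have hc2 : c = c' + t • a := by rw [hc']; abel
        rw [hc2, inner_add_left, real_inner_smul_left, hac', mul_zero, add_zero,
          real_inner_self_eq_norm_sq]
      have e1 : ‖a‖⁻¹ * ‖a‖ ^ 2 = ‖a‖ := by
        rw [sq, ← mul_assoc, inv_mul_cancel₀ hanorm.ne', one_mul]
      have e2 : ‖c'‖⁻¹ * ‖c'‖ ^ 2 = ‖c'‖ := by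
        rw [sq, ← mul_assoc, inv_mul_cancel₀ hc'norm.ne', one_mul]
      have hval : ω u v = Real.sqrt E := by
        rw [hω, hα, hα, hβ, hβ, hud, hvd]
        simp only [real_inner_smul_right]
        rw [hac', real_inner_self_eq_norm_sq, hcv, e1, e2]
        rw [mul_zero, zero_mul, sub_zero]
        rw [← Real.sqrt_sq hanorm.le, ← Real.sqrt_sq hc'norm.le,
          ← Real.sqrt_mul (sq_nonneg _), hcc']
      exact le_csSup hbdd ⟨u, v, hu1, hv1, hval⟩

end Part2Main

section Part3

variable {V : Type*} [NormedAddCommGroup V] [InnerProductSpace ℝ V] {m : ℕ}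

local notation "⟪" x ", " y "⟫" => @inner ℝ _ _ x y

set_option maxHeartbeats 1000000 in
lemma part3 (b : OrthonormalBasis (Fin m) ℝ V) (n : ℕ) (hmn : m = 2 * n) (hn : 0 < n) :
    ∃ ω : V →ₗ[ℝ] V →ₗ[ℝ] ℝ, (∀ x y, ω x y = - ω y x) ∧
      comassBil ω = 1 ∧ eucNormBil b ω = Real.sqrt (m / 2 : ℕ) * comassBil ω := by
  have hite : ∀ i j : Fin m, ⟪b i, b j⟫ = if i = j then (1:ℝ) else 0 :=
    orthonormal_iff_ite.mp b.orthonormal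
  set ev : Fin n → Fin m := fun k => ⟨2 * k.1, by omega⟩ with hevd
  set od : Fin n → Fin m := fun k => ⟨2 * k.1 + 1, by omega⟩ with hodd
  set φ : Fin m → (V →ₗ[ℝ] ℝ) := fun i => (innerSL ℝ (b i) : V →L[ℝ] ℝ).toLinearMap with hφd
  have hφapp : ∀ i x, φ i x = ⟪b i, x⟫ := fun i x => rfl
  set ω : V →ₗ[ℝ] V →ₗ[ℝ] ℝ :=
    ∑ k : Fin n, ((φ (ev k)).smulRight (φ (od k)) - (φ (od k)).smulRight (φ (ev k)))
    with hωd
  have happ : ∀ x y, ω x y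
      = ∑ k, (⟪b (ev k), x⟫ * ⟪b (od k), y⟫ - ⟪b (od k), x⟫ * ⟪b (ev k), y⟫) := by
    intro x y
    rw [hωd, LinearMap.sum_apply, LinearMap.sum_apply]
    refine Finset.sum_congr rfl fun k _ => ?_
    rw [LinearMap.sub_apply, LinearMap.sub_apply, LinearMap.smulRight_apply,
      LinearMap.smulRight_apply, LinearMap.smul_apply, LinearMap.smul_apply,
      smul_eq_mul, smul_eq_mul, hφapp, hφapp, hφapp, hφapp]
  have hevi : ∀ k l : Fin n, ev k = ev l → k = l := by
    intro k l h
    have := congrArg Fin.val h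
    simp only [hevd] at this
    exact Fin.ext (by omega)
  have hmix : ∀ k l : Fin n, ev k ≠ od l := by
    intro k l h
    have := congrArg Fin.val h
    simp only [hevd, hodd] at this
    omega
  have hskew : ∀ x y, ω x y = - ω y x := by
    intro x y
    rw [happ x y, happ y x, ← Finset.sum_neg_distrib]
    exact Finset.sum_congr rfl fun k _ => by ring
  set k0 : Fin n := ⟨0, hn⟩ with hk0d
  have hval1 : ω (b (ev k0)) (b (od k0)) = 1 := by
    rw [happ]
    rw [Finset.sum_eq_single k0]
    · rw [hite, hite, hite, hite, if_pos rfl, if_pos rfl, if_neg (Ne.symm (hmix k0 k0)),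
        if_neg (hmix k0 k0)]
      ring
    · intro k _ hk
      rw [hite, hite, hite, hite, if_neg (fun h => hk (hevi k k0 h)),
        if_neg (Ne.symm (hmix k0 k))]
      ring
    · intro h
      exact absurd (Finset.mem_univ k0) h
  -- comass upper bound
  have hub1 : ∀ r ∈ {r : ℝ | ∃ u v : V, ‖u‖ = 1 ∧ ‖v‖ = 1 ∧ ω u v = r}, r ≤ 1 := by
    rintro r ⟨u, v, hu, hv, rfl⟩
    rw [happ]
    set P : Fin n → ℝ := fun k => ⟪b (ev k), u⟫ ^ 2 + ⟪b (od k), u⟫ ^ 2 with hPd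
    set Q : Fin n → ℝ := fun k => ⟪b (ev k), v⟫ ^ 2 + ⟪b (od k), v⟫ ^ 2 with hQd
    have hstep1 : ∀ k, ⟪b (ev k), u⟫ * ⟪b (od k), v⟫ - ⟪b (od k), u⟫ * ⟪b (ev k), v⟫
        ≤ Real.sqrt (P k) * Real.sqrt (Q k) := by
      intro k
      rw [← Real.sqrt_mul (by positivity)]
      calc ⟪b (ev k), u⟫ * ⟪b (od k), v⟫ - ⟪b (od k), u⟫ * ⟪b (ev k), v⟫
          ≤ |⟪b (ev k), u⟫ * ⟪b (od k), v⟫ - ⟪b (od k), u⟫ * ⟪b (ev k), v⟫| := le_abs_self _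
        _ = Real.sqrt ((⟪b (ev k), u⟫ * ⟪b (od k), v⟫ - ⟪b (od k), u⟫ * ⟪b (ev k), v⟫) ^ 2) :=
            (Real.sqrt_sq_eq_abs _).symm
        _ ≤ Real.sqrt (P k * Q k) := Real.sqrt_le_sqrt
            (det2_bound ⟪b (ev k), u⟫ ⟪b (od k), u⟫ ⟪b (ev k), v⟫ ⟪b (od k), v⟫)
    have pair_sum_le : ∀ x : V, ‖x‖ = 1 →
        (∑ k, (⟪b (ev k), x⟫ ^ 2 + ⟪b (od k), x⟫ ^ 2)) ≤ 1 := by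
      intro x hx
      have hdisj : Disjoint (Finset.univ.image ev) (Finset.univ.image od) := by
        rw [Finset.disjoint_left]
        intro i hie hio
        obtain ⟨k, _, hk⟩ := Finset.mem_image.mp hie
        obtain ⟨l, _, hl⟩ := Finset.mem_image.mp hio
        exact hmix k l (hk.trans hl.symm)
      have hesum : ∑ i ∈ Finset.univ.image ev, ⟪b i, x⟫ ^ 2 = ∑ k, ⟪b (ev k), x⟫ ^ 2 :=
        Finset.sum_image (fun k _ l _ h => hevi k l h)
      have hosum : ∑ i ∈ Finset.univ.image od, ⟪b i, x⟫ ^ 2 = ∑ k, ⟪b (od k), x⟫ ^ 2 :=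
        Finset.sum_image (fun k _ l _ h => by
          have := congrArg Fin.val h
          simp only [hodd] at this
          exact Fin.ext (by omega))
      rw [Finset.sum_add_distrib, ← hesum, ← hosum, ← Finset.sum_union hdisj]
      calc ∑ i ∈ Finset.univ.image ev ∪ Finset.univ.image od, ⟪b i, x⟫ ^ 2
          ≤ ∑ i : Fin m, ⟪b i, x⟫ ^ 2 := Finset.sum_le_sum_of_subset_of_nonneg
            (Finset.subset_univ _) (fun i _ _ => sq_nonneg _)
        _ = 1 := by rw [my_parseval_sq b x, hx]; norm_num
    have hPle : ∑ k, P k ≤ 1 := pair_sum_le u hu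
    have hQle : ∑ k, Q k ≤ 1 := pair_sum_le v hv
    have hsum1 : ∑ k, Real.sqrt (P k) * Real.sqrt (Q k)
        ≤ Real.sqrt (∑ k, P k) * Real.sqrt (∑ k, Q k) := by
      have hcs := Finset.sum_sq_le_sum_mul_sum_of_sq_eq_mul Finset.univ
        (r := fun k => Real.sqrt (P k) * Real.sqrt (Q k)) (f := P) (g := Q)
        (fun k _ => by positivity) (fun k _ => by positivity)
        (fun k _ => by
          rw [mul_pow, Real.sq_sqrt (by positivity), Real.sq_sqrt (by positivity)])
      have h1 : 0 ≤ ∑ k, Real.sqrt (P k) * Real.sqrt (Q k) := by positivity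
      calc ∑ k, Real.sqrt (P k) * Real.sqrt (Q k)
          = Real.sqrt ((∑ k, Real.sqrt (P k) * Real.sqrt (Q k)) ^ 2) := (Real.sqrt_sq h1).symm
        _ ≤ Real.sqrt ((∑ k, P k) * ∑ k, Q k) := Real.sqrt_le_sqrt hcs
        _ = _ := Real.sqrt_mul (Finset.sum_nonneg fun k _ => by positivity) _
    calc ∑ k, (⟪b (ev k), u⟫ * ⟪b (od k), v⟫ - ⟪b (od k), u⟫ * ⟪b (ev k), v⟫)
        ≤ ∑ k, Real.sqrt (P k) * Real.sqrt (Q k) := Finset.sum_le_sum fun k _ => hstep1 k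
      _ ≤ Real.sqrt (∑ k, P k) * Real.sqrt (∑ k, Q k) := hsum1
      _ ≤ 1 := by
          have e1 : Real.sqrt (∑ k, P k) ≤ 1 := by
            rw [← Real.sqrt_one]
            exact Real.sqrt_le_sqrt hPle
          have e2 : Real.sqrt (∑ k, Q k) ≤ 1 := by
            rw [← Real.sqrt_one]
            exact Real.sqrt_le_sqrt hQle
          nlinarith [Real.sqrt_nonneg (∑ k, P k), Real.sqrt_nonneg (∑ k, Q k)]
  have hcom : comassBil ω = 1 := by
    refine le_antisymm (Real.sSup_le hub1 zero_le_one) (le_csSup ⟨1, fun r hr => hub1 r hr⟩ ?_)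
    exact ⟨b (ev k0), b (od k0), b.orthonormal.1 _, b.orthonormal.1 _, hval1⟩
  -- Frobenius computation
  have hrow : ∀ i : Fin m, ∑ j, (ω (b i) (b j)) ^ 2 = 1 := by
    intro i
    have hi2 : i.1 / 2 < n := by omega
    set ki : Fin n := ⟨i.1 / 2, hi2⟩ with hkid
    rcases Nat.mod_two_eq_zero_or_one i.1 with hp | hp
    · have hie : ev ki = i := Fin.ext (by simp only [hevd, hkid]; omega)
      have hione : od ki ≠ i := by
        intro h
        have := congrArg Fin.val h
        simp only [hodd, hkid] at this
        omega
      have hF : ∀ j, ω (b i) (b j) = (if od ki = j then (1:ℝ) else 0) := by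
        intro j
        rw [happ]
        rw [Finset.sum_eq_single ki]
        · rw [hite, hite, hite, hite, if_pos hie, if_neg hione]
          ring
        · intro k _ hk
          have h1 : ev k ≠ i := fun h => hk (hevi k ki (h.trans hie.symm))
          have h2 : od k ≠ i := by
            intro h
            have h3 := congrArg Fin.val h
            simp only [hodd] at h3
            omega
          rw [hite, hite, hite, hite, if_neg h1, if_neg h2]
          ring
        · intro h
          exact absurd (Finset.mem_univ ki) h
      rw [Finset.sum_congr rfl fun j _ => by rw [hF j]]
      simp [apply_ite (fun x : ℝ => x ^ 2), Finset.sum_ite_eq]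
    · have hio : od ki = i := Fin.ext (by simp only [hodd, hkid]; omega)
      have hine : ev ki ≠ i := by
        intro h
        have := congrArg Fin.val h
        simp only [hevd, hkid] at this
        omega
      have hF : ∀ j, ω (b i) (b j) = -(if ev ki = j then (1:ℝ) else 0) := by
        intro j
        rw [happ]
        rw [Finset.sum_eq_single ki]
        · rw [hite, hite, hite, hite, if_pos hio, if_neg hine]
          ring
        · intro k _ hk
          have h2 : od k ≠ i := by
            intro h
            apply hk
            have h3 : 2 * k.1 + 1 = i.1 := by simpa [hodd] using congrArg Fin.val h
            exact Fin.ext (show k.1 = i.1 / 2 by omega)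
          have h1 : ev k ≠ i := by
            intro h
            have h3 := congrArg Fin.val h
            simp only [hevd] at h3
            omega
          rw [hite, hite, hite, hite, if_neg h1, if_neg h2]
          ring
        · intro h
          exact absurd (Finset.mem_univ ki) h
      rw [Finset.sum_congr rfl fun j _ => by rw [hF j]]
      simp [apply_ite (fun x : ℝ => x ^ 2), Finset.sum_ite_eq]
  have hsum : ∑ i, ∑ j, (ω (b i) (b j)) ^ 2 = (m : ℝ) := by
    rw [Finset.sum_congr rfl fun i _ => hrow i, Finset.sum_const, Finset.card_univ,
      Fintype.card_fin, nsmul_eq_mul, mul_one]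
  have hn2 : m / 2 = n := by omega
  refine ⟨ω, hskew, hcom, ?_⟩
  rw [eucNormBil, hsum, hcom, mul_one, hn2]
  congr 1
  push_cast [hmn]
  ring

end Part3

/-- On an `m`-dimensional real inner product space: every (alternating) 2-covector `ω`
satisfies `‖ω‖_C ≤ ‖ω‖₂ ≤ √⌊m/2⌋ ⬝ ‖ω‖_C`; the left inequality is an equality for
simple 2-covectors; and for `m = 2n > 0` the standard symplectic form achieves equality
on the right (it has comass `1` and Euclidean norm `√⌊m/2⌋ = √n`). -/
theorem comass_le_eucNorm_le_two_covector
    {V : Type*} [NormedAddCommGroup V] [InnerProductSpace ℝ V] [FiniteDimensional ℝ V]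
    {m : ℕ} (hm : Module.finrank ℝ V = m) (b : OrthonormalBasis (Fin m) ℝ V) :
    (∀ ω : V →ₗ[ℝ] V →ₗ[ℝ] ℝ, (∀ x y, ω x y = - ω y x) →
      comassBil ω ≤ eucNormBil b ω ∧
        eucNormBil b ω ≤ Real.sqrt (m / 2 : ℕ) * comassBil ω) ∧
    (∀ ω : V →ₗ[ℝ] V →ₗ[ℝ] ℝ,
      (∃ α β : V →ₗ[ℝ] ℝ, ∀ x y, ω x y = α x * β y - α y * β x) →
      eucNormBil b ω = comassBil ω) ∧
    (∀ n : ℕ, m = 2 * n → 0 < n →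
      ∃ ω : V →ₗ[ℝ] V →ₗ[ℝ] ℝ, (∀ x y, ω x y = - ω y x) ∧
        comassBil ω = 1 ∧ eucNormBil b ω = Real.sqrt (m / 2 : ℕ) * comassBil ω) :=
  ⟨fun ω hskew => part1 hm b ω hskew,
   fun ω h => part2 hm b ω h,
   fun n hmn hn => part3 b n hmn hn⟩
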